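/- arXiv:0908.2467 — 2 statements merged into one kernel-verified Lean document; each statement's English description precedes it below -/
import Mathlib

section
/- If the chromatic number of the coloring graph Ĝ is strictly greater than n, then no saturating decodable stream assignment exists. -/
/-- Vertex type of the coloring graph `Ĝ`: the sink subgraph `V̂_j` consists of
`nj j` regular vertices (`Sum.inl`) and `n - nj j` fictitious vertices (`Sum.inr`). -/
abbrev ColoringVertex (t : ℕ) (nj : Fin t → ℕ) (n : ℕ) : Type :=
  (j : Fin t) × (Fin (nj j) ⊕ Fin (n - nj j))

/-- `cross R x y` holds when `x` is a regular vertex `v_{j,k}`, `y` is a fictitious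
vertex of a different sink subgraph `V̂_{j'}`, and the contamination relation
`R j k j'` holds. -/
def cross {t n : ℕ} {nj : Fin t → ℕ} (R : (j : Fin t) → Fin (nj j) → Fin t → Prop)
    (x y : ColoringVertex t nj n) : Prop :=
  x.1 ≠ y.1 ∧ (∃ k : Fin (nj x.1), x.2 = Sum.inl k ∧ R x.1 k y.1) ∧
    ∃ k' : Fin (n - nj y.1), y.2 = Sum.inr k'

/-- The coloring graph `Ĝ`: two distinct vertices in the same sink subgraph are
always adjacent; a regular vertex `v_{j,k}` is adjacent to every fictitious vertex
of `V̂_{j'}` (for `j' ≠ j`) iff `R j k j'`; there are no other adjacencies. -/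
def coloringGraph (t n : ℕ) (nj : Fin t → ℕ)
    (R : (j : Fin t) → Fin (nj j) → Fin t → Prop) :
    SimpleGraph (ColoringVertex t nj n) where
  Adj x y := x ≠ y ∧ (x.1 = y.1 ∨ cross R x y ∨ cross R y x)
  symm := ⟨by
    rintro x y ⟨h1, h2⟩
    refine ⟨h1.symm, ?_⟩
    rcases h2 with h | h | h
    · exact Or.inl h.symm
    · exact Or.inr (Or.inr h)
    · exact Or.inr (Or.inl h)⟩
  loopless := ⟨fun x h => h.1 rfl⟩

/-- A saturating decodable stream assignment: each path `(j,k)` gets a stream in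
`{1,…,n}` (modelled as `Fin n`), such that distinct paths to the same sink get
distinct streams (saturation), and whenever path `k` to sink `j` contaminates onto
some path to a different sink `j'`, some path to `j'` is assigned the same stream
(decodability). -/
def IsSatDecodable (t n : ℕ) (nj : Fin t → ℕ)
    (R : (j : Fin t) → Fin (nj j) → Fin t → Prop)
    (f : (j : Fin t) → Fin (nj j) → Fin n) : Prop :=
  (∀ j, Function.Injective (f j)) ∧
    ∀ (j j' : Fin t) (k : Fin (nj j)), j ≠ j' → R j k j' →
      ∃ k' : Fin (nj j'), f j' k' = f j k

/-- If the chromatic number of the coloring graph `Ĝ` exceeds `n`, then no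
saturating decodable stream assignment exists. -/
theorem no_satDecodable_of_chromaticNumber_gt
    (t n : ℕ) (ht : 1 ≤ t) (nj : Fin t → ℕ) (hnj : ∀ j, 1 ≤ nj j)
    (hn : n = Finset.univ.sup nj)
    (R : (j : Fin t) → Fin (nj j) → Fin t → Prop)
    (hχ : (n : ℕ∞) < (coloringGraph t n nj R).chromaticNumber) :
    ¬ ∃ f : (j : Fin t) → Fin (nj j) → Fin n, IsSatDecodable t n nj R f := by
  classical
  rintro ⟨f, hinj, hdec⟩
  set S : Fin t → Finset (Fin n) := fun j => (Finset.univ.image (f j))ᶜ with hS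
  have hcard : ∀ j, (S j).card = n - nj j := by
    intro j
    simp [hS, Finset.card_compl, Finset.card_image_of_injective _ (hinj j)]
  let g : (j : Fin t) → Fin (n - nj j) → Fin n := fun j k =>
    ((S j).equivFin.symm (Fin.cast (hcard j).symm k)).val
  have hgmem : ∀ j k, g j k ∈ S j := fun j k => ((S j).equivFin.symm _).2
  have hgnot : ∀ j k k', g j k ≠ f j k' := by
    intro j k k' h
    have := hgmem j k
    rw [h, hS] at this
    simp at this
  have hginj : ∀ j, Function.Injective (g j) := by
    intro j a b hab
    have h1 : (S j).equivFin.symm (Fin.cast (hcard j).symm a)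
        = (S j).equivFin.symm (Fin.cast (hcard j).symm b) := Subtype.ext hab
    have h2 := (S j).equivFin.symm.injective h1
    exact Fin.val_injective (by simpa using congrArg Fin.val h2)
  let c : ColoringVertex t nj n → Fin n := fun x =>
    match x with
    | ⟨j, Sum.inl k⟩ => f j k
    | ⟨j, Sum.inr k⟩ => g j k
  have hcross : ∀ x y : ColoringVertex t nj n, cross R x y → c x ≠ c y := by
    rintro ⟨j, a⟩ ⟨j', b⟩ ⟨hne, ⟨k, hk, hR⟩, ⟨k', hk'⟩⟩ heq
    rw [show a = Sum.inl k from hk, show b = Sum.inr k' from hk'] at heq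
    have heq' : f j k = g j' k' := heq
    obtain ⟨k'', hk''⟩ := hdec j j' k hne hR
    exact hgnot j' k' k'' (heq'.symm.trans hk''.symm)
  have hvalid : ∀ {x y : ColoringVertex t nj n},
      (coloringGraph t n nj R).Adj x y → c x ≠ c y := by
    rintro ⟨j, a⟩ ⟨j', b⟩ ⟨hne, hcase⟩
    rcases hcase with h | h | h
    · cases h
      have hab : a ≠ b := fun h => hne (by rw [h])
      cases a with
      | inl k =>
        cases b with
        | inl k2 =>
          intro heq
          exact hab (by rw [hinj j heq])
        | inr k2 =>
          intro heq
          exact hgnot j k2 k heq.symm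
      | inr k =>
        cases b with
        | inl k2 =>
          intro heq
          exact hgnot j k k2 heq
        | inr k2 =>
          intro heq
          exact hab (by rw [hginj j heq])
    · exact hcross _ _ h
    · exact fun heq => hcross _ _ h heq.symm
  have hcol : (coloringGraph t n nj R).Colorable n :=
    ⟨⟨c, fun {x y} h => hvalid h⟩⟩
  exact absurd (lt_of_lt_of_le hχ hcol.chromaticNumber_le) (lt_irrefl _)
end

section
/- If m_{j,j'} > n_{j'} for some ordered pair of distinct sinks (j,j'), then the chromatic number of the coloring graph Ĝ is strictly greater than n, and consequently no saturating decodable stream assignment exists. -/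
/-- If `m_{j,j'} > n_{j'}` for some ordered pair of distinct sinks `(j, j')`
(where `m_{j,j'}` counts the paths to `j` contaminating onto some path to `j'`),
then the chromatic number of `Ĝ` exceeds `n`, and consequently no saturating
decodable stream assignment exists. -/
theorem chromaticNumber_gt_of_overload
    (t n : ℕ) (ht : 1 ≤ t) (nj : Fin t → ℕ) (hnj : ∀ j, 1 ≤ nj j)
    (hn : n = Finset.univ.sup nj)
    (R : (j : Fin t) → Fin (nj j) → Fin t → Prop)
    (j j' : Fin t) (hjj' : j ≠ j')
    (hm : nj j' < {k : Fin (nj j) | R j k j'}.ncard) :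
    (n : ℕ∞) < (coloringGraph t n nj R).chromaticNumber ∧
      ¬ ∃ f : (j : Fin t) → Fin (nj j) → Fin n, IsSatDecodable t n nj R f := by
  have key : ¬ ∃ f : (j : Fin t) → Fin (nj j) → Fin n, IsSatDecodable t n nj R f := by
    rintro ⟨f, hinj, hdec⟩
    have hcard : {k : Fin (nj j) | R j k j'}.ncard ≤ nj j' := by
      have h : ∀ k : {k : Fin (nj j) | R j k j'}, ∃ k' : Fin (nj j'), f j' k' = f j k :=
        fun k => hdec j j' k hjj' k.2
      choose g hg using h
      have hgi : Function.Injective g := by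
        intro a b hab
        have h1 : f j (a : Fin (nj j)) = f j (b : Fin (nj j)) := by
          rw [← hg a, ← hg b, hab]
        exact Subtype.ext (hinj j h1)
      calc {k : Fin (nj j) | R j k j'}.ncard
          = Nat.card {k : Fin (nj j) | R j k j'} := rfl
        _ ≤ Nat.card (Fin (nj j')) := Nat.card_le_card_of_injective g hgi
        _ = nj j' := by simp
    omega
  refine ⟨?_, key⟩
  by_contra h
  push_neg at h
  have hcol : (coloringGraph t n nj R).Colorable n :=
    SimpleGraph.chromaticNumber_le_iff_colorable.mp h
  obtain ⟨C⟩ := hcol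
  refine key ⟨fun j0 k => C ⟨j0, Sum.inl k⟩, ?_, ?_⟩
  · intro j0 a b hab
    by_contra hne
    have hadj : (coloringGraph t n nj R).Adj ⟨j0, Sum.inl a⟩ ⟨j0, Sum.inl b⟩ := by
      refine ⟨?_, Or.inl rfl⟩
      simp only [ne_eq, Sigma.mk.inj_iff, heq_eq_eq, Sum.inl.injEq]
      tauto
    exact C.valid hadj hab
  · intro j1 j2 k hne hR
    -- the coloring restricted to the sink subgraph of j2 is injective on a set of size n
    set g : Fin (nj j2) ⊕ Fin (n - nj j2) → Fin n := fun v => C ⟨j2, v⟩ with hgdef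
    have hgi : Function.Injective g := by
      intro a b hab
      by_contra hab'
      have hadj : (coloringGraph t n nj R).Adj ⟨j2, a⟩ ⟨j2, b⟩ := by
        refine ⟨?_, Or.inl rfl⟩
        simp only [ne_eq, Sigma.mk.inj_iff, heq_eq_eq]
        tauto
      exact C.valid hadj hab
    have hle : nj j2 ≤ n := hn ▸ Finset.le_sup (Finset.mem_univ j2)
    have hcardeq : Fintype.card (Fin (nj j2) ⊕ Fin (n - nj j2)) = Fintype.card (Fin n) := by
      simp [Fintype.card_sum]
      omega
    have hgs : Function.Surjective g :=
      ((Fintype.bijective_iff_injective_and_card g).mpr ⟨hgi, hcardeq⟩).2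
    obtain ⟨v, hv⟩ := hgs (C ⟨j1, Sum.inl k⟩)
    cases v with
    | inl k' => exact ⟨k', hv⟩
    | inr k' =>
      exfalso
      have hadj : (coloringGraph t n nj R).Adj ⟨j1, Sum.inl k⟩ ⟨j2, Sum.inr k'⟩ := by
        refine ⟨?_, Or.inr (Or.inl ⟨hne, ⟨k, rfl, hR⟩, ⟨k', rfl⟩⟩)⟩
        simp only [ne_eq, Sigma.mk.inj_iff]
        tauto
      exact C.valid hadj hv.symm
end
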